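/- Let {(x_i, g_i, f_i)}_{i∈I} be a finite family in E × E × ℝ, and let L > 0, M > 0. There exists a proper closed convex function f : E → ℝ ∪ {+∞} interpolating the data (f(x_i) = f_i, g_i ∈ ∂f(x_i)) that is L-smooth and whose all subgradients g (at any point) satisfy ‖g‖ ≤ M, if and only if for all i, j ∈ I: f_i − f_j − ⟨g_j, x_i − x_j⟩ ≥ (1/(2L))‖g_i − g_j‖² and ‖g_j‖ ≤ M. -/

import Mathlib

variable {E : Type*} [NormedAddCommGroup E] [InnerProductSpace ℝ E] [FiniteDimensional ℝ E]

/-- `f` is a proper, closed (lower semicontinuous) convex extended-real-valued function. -/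
def IsProperClosedConvex (f : E → EReal) : Prop :=
  (∃ x, f x ≠ ⊤) ∧ (∀ x, f x ≠ ⊥) ∧ LowerSemicontinuous f ∧
    ∀ x y : E, ∀ t : ℝ, 0 ≤ t → t ≤ 1 →
      f (t • x + (1 - t) • y) ≤ (t : EReal) * f x + ((1 - t : ℝ) : EReal) * f y

/-- `g` is a subgradient of `f` at `x`. -/
def IsSubgradientAt (f : E → EReal) (x g : E) : Prop :=
  ∀ y, f x + ((inner ℝ g (y - x) : ℝ) : EReal) ≤ f y

open RealInnerProductSpace

private lemma aux_t_le {a b : ℝ} (h : ∀ t : ℝ, 0 < t → t < 1 → a ≤ b * t) : a ≤ 0 := by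
  by_contra hc
  push_neg at hc
  rcases le_or_gt b 0 with hb | hb
  · have := h (1/2) (by norm_num) (by norm_num)
    nlinarith
  · have ht : 0 < min (1/2) (a / (2*b)) := lt_min (by norm_num) (by positivity)
    have ht1 : min (1/2) (a/(2*b)) < 1 := lt_of_le_of_lt (min_le_left _ _) (by norm_num)
    have h2 := h _ ht ht1
    have h3 : b * min (1/2) (a/(2*b)) ≤ b * (a/(2*b)) :=
      mul_le_mul_of_nonneg_left (min_le_right _ _) hb.le
    have h4 : b * (a/(2*b)) = a/2 := by field_simp
    linarith


private lemma aux_lsc_min (F : E → EReal) (hF : LowerSemicontinuous F) {K : Set E}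
    (hK : IsCompact K) (hne : K.Nonempty) : ∃ p ∈ K, ∀ w ∈ K, F p ≤ F w := by
  by_cases htop : ∀ w ∈ K, F w = ⊤
  · obtain ⟨p, hp⟩ := hne
    exact ⟨p, hp, fun w hw => by rw [htop p hp, htop w hw]⟩
  push_neg at htop
  obtain ⟨w₀, hw₀K, hw₀⟩ := htop
  set m := sInf (F '' K) with hm
  have hmlt : m < ⊤ := lt_of_le_of_lt (sInf_le ⟨w₀, hw₀K, rfl⟩) (lt_top_iff_ne_top.2 hw₀)
  haveI : Nonempty {c : EReal // m < c} := ⟨⟨⊤, hmlt⟩⟩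
  set S : {c : EReal // m < c} → Set E := fun c => K ∩ F ⁻¹' Set.Iic c.1 with hS
  have hSne : ∀ c, (S c).Nonempty := by
    rintro ⟨c, hc⟩
    obtain ⟨v, hv, hvc⟩ := sInf_lt_iff.1 (hm ▸ hc)
    obtain ⟨p, hpK, rfl⟩ := hv
    exact ⟨p, hpK, le_of_lt hvc⟩
  have hScl : ∀ c, IsClosed (S c) := fun c =>
    (hK.isClosed.inter (hF.isClosed_preimage c.1))
  have hScp : ∀ c, IsCompact (S c) := fun c => hK.inter_right (hF.isClosed_preimage c.1)
  have hdir : Directed (· ⊇ ·) S := by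
    rintro ⟨c, hc⟩ ⟨d, hd⟩
    refine ⟨⟨min c d, lt_min hc hd⟩, ?_, ?_⟩
    · rintro w ⟨hwK, hw⟩
      simp only [Set.mem_preimage, Set.mem_Iic] at hw ⊢
      exact ⟨hwK, le_trans hw (min_le_left _ _)⟩
    · rintro w ⟨hwK, hw⟩
      simp only [Set.mem_preimage, Set.mem_Iic] at hw ⊢
      exact ⟨hwK, le_trans hw (min_le_right _ _)⟩
  obtain ⟨p, hp⟩ := IsCompact.nonempty_iInter_of_directed_nonempty_isCompact_isClosed
    S hdir hSne hScp hScl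
  simp only [Set.mem_iInter] at hp
  have hpK : p ∈ K := (hp ⟨⊤, hmlt⟩).1
  refine ⟨p, hpK, fun w hw => ?_⟩
  have hpm : F p ≤ m := by
    refine le_of_forall_gt_imp_ge_of_dense fun c hc => ?_
    exact (hp ⟨c, hc⟩).2
  exact le_trans hpm (sInf_le ⟨w, hw, rfl⟩)


private lemma aux_gauss (n : ℕ) : (∑ m ∈ Finset.range n, ((m:ℝ)+1)) = n*(n+1)/2 := by
  induction n with
  | zero => simp
  | succ k ih => rw [Finset.sum_range_succ, ih]; push_cast; ring


private lemma aux_norm_comb (a b : E) (t : ℝ) :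
    ‖(1-t)•a + t•b‖^2 = (1-t)*‖a‖^2 + t*‖b‖^2 - t*(1-t)*‖b-a‖^2 := by
  have h1 : ∀ w : E, ‖w‖^2 = ⟪w,w⟫ := fun w => (real_inner_self_eq_norm_sq w).symm
  simp only [h1, inner_sub_left, inner_sub_right, inner_add_left, inner_add_right,
    real_inner_smul_left, real_inner_smul_right]
  rw [real_inner_comm b a]
  ring

private lemma aux_construction {ι : Type*} [Fintype ι] [Nonempty ι] (L M : ℝ)
    (hL : 0 < L) (hM : 0 < M) (x g : ι → E) (f : ι → ℝ)
    (hcond : ∀ i j, 1 / (2 * L) * ‖g i - g j‖ ^ 2 ≤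
          f i - f j - (inner ℝ (g j) (x i - x j) : ℝ) ∧ ‖g j‖ ≤ M) :
    ∃ F : E → EReal, IsProperClosedConvex F ∧
        (∀ x₁ x₂ g₁ g₂, IsSubgradientAt F x₁ g₁ → IsSubgradientAt F x₂ g₂ →
          ‖g₁ - g₂‖ ≤ L * ‖x₁ - x₂‖) ∧
        (∀ z h, IsSubgradientAt F z h → ‖h‖ ≤ M) ∧
        ∀ i, F (x i) = ((f i : ℝ) : EReal) ∧ IsSubgradientAt F (x i) (g i) := by
  classical
  obtain ⟨c, hc⟩ : ∃ v : ι → ℝ, v = fun i => ⟪g i, x i⟫ - f i := ⟨_, rfl⟩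
  obtain ⟨q, hq⟩ : ∃ v : ι → E → ℝ,
    v = fun i y => c i + ⟪x i, y - g i⟫ + 1/(2*L) * ‖y - g i‖^2 := ⟨_, rfl⟩
  have hqcont : ∀ i, Continuous (q i) := by
    intro i
    rw [hq]
    apply Continuous.add
    · exact (continuous_const.add ((continuous_const.inner (continuous_id.sub continuous_const))))
    · exact continuous_const.mul (((continuous_id.sub continuous_const).norm).pow 2)
  obtain ⟨h, hh⟩ : ∃ v : E → ℝ,
    v = fun y => Finset.univ.sup' Finset.univ_nonempty (fun i => q i y) := ⟨_, rfl⟩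
  have hhcont : Continuous h := by
    rw [hh]
    exact Continuous.finset_sup'_apply Finset.univ_nonempty (fun i _ => hqcont i)
  set B : Set E := Metric.closedBall (0:E) M with hB
  have h0B : (0:E) ∈ B := Metric.mem_closedBall_self hM.le
  have hBcp : IsCompact B := isCompact_closedBall 0 M
  obtain ⟨φ, hφ⟩ : ∃ v : E → E → ℝ, v = fun z y => ⟪z, y⟫ - h y := ⟨_, rfl⟩
  have hφcont : ∀ z, Continuous (φ z) := by
    intro z
    rw [hφ]
    exact (continuous_const.inner continuous_id).sub hhcont
  obtain ⟨F₀, hF₀⟩ : ∃ v : E → ℝ, v = fun z => sSup ((φ z) '' B) := ⟨_, rfl⟩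
  have hkey : ∀ z, (∃ y₀ ∈ B, F₀ z = φ z y₀) ∧ ∀ y ∈ B, φ z y ≤ F₀ z := by
    intro z
    obtain ⟨y₀, hy₀B, hmax⟩ := hBcp.exists_isMaxOn ⟨0, h0B⟩ (hφcont z).continuousOn
    have hgr : IsGreatest ((φ z) '' B) (φ z y₀) :=
      ⟨⟨y₀, hy₀B, rfl⟩, by rintro v ⟨y, hy, rfl⟩; exact hmax hy⟩
    have heq : F₀ z = φ z y₀ := by rw [hF₀]; exact hgr.csSup_eq
    exact ⟨⟨y₀, hy₀B, heq⟩, fun y hy => heq ▸ hmax hy⟩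
  have hgB : ∀ i, ‖g i‖ ≤ M := fun i => (hcond i i).2
  have hgBmem : ∀ i, g i ∈ B := fun i => mem_closedBall_zero_iff.2 (hgB i)
  have hqself : ∀ i, q i (g i) = c i := by intro i; simp [hq]
  have hhg : ∀ i, h (g i) = c i := by
    intro i
    rw [hh]
    refine le_antisymm (Finset.sup'_le _ _ fun j _ => ?_) ?_
    · have hji := (hcond j i).1
      have hexp : ‖g i - g j‖^2 = ‖g j - g i‖^2 := by rw [norm_sub_rev]
      have hin : ⟪x j, g i - g j⟫ = ⟪g i, x j⟫ - ⟪g j, x j⟫ := by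
        rw [inner_sub_right, real_inner_comm (x j) (g i), real_inner_comm (x j) (g j)]
      have hin2 : (inner ℝ (g i) (x j - x i) : ℝ) = ⟪g i, x j⟫ - ⟪g i, x i⟫ := inner_sub_right _ _ _
      simp only [hq, hc]
      rw [hin, hexp]
      rw [hin2] at hji
      linarith
    · have hle := Finset.le_sup' (fun j => q j (g i)) (Finset.mem_univ i)
      rw [hqself i] at hle
      exact hle
  have hqcomb : ∀ i (a b : E) (t : ℝ), q i ((1-t)•a + t•b) =
      (1-t) * q i a + t * q i b - 1/(2*L) * (t*(1-t)) * ‖b - a‖^2 := by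
    intro i a b t
    have hv : (1-t)•a + t•b - g i = (1-t)•(a - g i) + t•(b - g i) := by
      rw [smul_sub, smul_sub]
      have hgi : (1-t)•(g i) + t•(g i) = g i := by rw [← add_smul]; simp
      have habel : (1-t)•a - (1-t)•(g i) + (t•b - t•(g i))
          = (1-t)•a + t•b - ((1-t)•(g i) + t•(g i)) := by abel
      rw [habel, hgi]
    have hv2 : (b - g i) - (a - g i) = b - a := by abel
    simp only [hq]
    rw [hv, aux_norm_comb (a - g i) (b - g i) t, hv2, inner_add_right,
      real_inner_smul_right, real_inner_smul_right]
    ring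
  have hstrong : ∀ (a b : E) (t : ℝ), 0 ≤ t → t ≤ 1 →
      h ((1-t)•a + t•b) ≤ (1-t)*h a + t*h b - 1/(2*L) * (t*(1-t)) * ‖b - a‖^2 := by
    intro a b t ht0 ht1
    have hrw : h ((1-t)•a + t•b)
        = Finset.univ.sup' Finset.univ_nonempty (fun i => q i ((1-t)•a + t•b)) := by rw [hh]
    rw [hrw]
    refine Finset.sup'_le _ _ fun i _ => ?_
    have h1 : q i a ≤ h a := by rw [hh]; exact Finset.le_sup' (fun j => q j a) (Finset.mem_univ i)
    have h2 : q i b ≤ h b := by rw [hh]; exact Finset.le_sup' (fun j => q j b) (Finset.mem_univ i)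
    have e1 : (1-t) * q i a ≤ (1-t) * h a := mul_le_mul_of_nonneg_left h1 (by linarith)
    have e2 : t * q i b ≤ t * h b := mul_le_mul_of_nonneg_left h2 ht0
    linarith [hqcomb i a b t]
  have hlip : ∀ z₁ z₂, F₀ z₁ ≤ F₀ z₂ + M * ‖z₁ - z₂‖ := by
    intro z₁ z₂
    obtain ⟨⟨y₀, hy₀B, heq⟩, _⟩ := hkey z₁
    have hub := (hkey z₂).2 y₀ hy₀B
    have hy₀ : ‖y₀‖ ≤ M := mem_closedBall_zero_iff.1 hy₀B
    have hsplit : φ z₁ y₀ = φ z₂ y₀ + ⟪z₁ - z₂, y₀⟫ := by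
      simp only [hφ, inner_sub_left]; ring
    have hcs : ⟪z₁ - z₂, y₀⟫ ≤ ‖z₁ - z₂‖ * ‖y₀‖ := real_inner_le_norm _ _
    have hm : ‖z₁ - z₂‖ * ‖y₀‖ ≤ M * ‖z₁ - z₂‖ := by
      rw [mul_comm]; exact mul_le_mul_of_nonneg_right hy₀ (norm_nonneg _)
    rw [heq, hsplit]
    linarith
  have hconv₀ : ∀ (z₁ z₂ : E) (t : ℝ), 0 ≤ t → t ≤ 1 →
      F₀ (t•z₁ + (1-t)•z₂) ≤ t * F₀ z₁ + (1-t) * F₀ z₂ := by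
    intro z₁ z₂ t ht0 ht1
    obtain ⟨⟨y₀, hy₀B, heq⟩, _⟩ := hkey (t•z₁ + (1-t)•z₂)
    have h1 := (hkey z₁).2 y₀ hy₀B
    have h2 := (hkey z₂).2 y₀ hy₀B
    have hsplit : φ (t•z₁ + (1-t)•z₂) y₀ = t * φ z₁ y₀ + (1-t) * φ z₂ y₀ := by
      simp only [hφ, inner_add_left, real_inner_smul_left]; ring
    have e1 : t * φ z₁ y₀ ≤ t * F₀ z₁ := mul_le_mul_of_nonneg_left h1 ht0
    have e2 : (1-t) * φ z₂ y₀ ≤ (1-t) * F₀ z₂ := mul_le_mul_of_nonneg_left h2 (by linarith)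
    rw [heq, hsplit]
    linarith
  obtain ⟨F, hF⟩ : ∃ v : E → EReal, v = fun z => ((F₀ z : ℝ) : EReal) := ⟨_, rfl⟩
  have hsgiff : ∀ z u, IsSubgradientAt F z u ↔ ∀ y, F₀ z + ⟪u, y - z⟫ ≤ F₀ y := by
    intro z u
    constructor
    · intro hs y
      have h1 := hs y
      simp only [hF, ← EReal.coe_add] at h1
      exact EReal.coe_le_coe_iff.1 h1
    · intro hs y
      simp only [hF, ← EReal.coe_add]
      exact EReal.coe_le_coe_iff.2 (hs y)
  have hMbd : ∀ z u, IsSubgradientAt F z u → ‖u‖ ≤ M := by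
    intro z u hs
    have h1 := (hsgiff z u).1 hs (z + u)
    have h2 : ⟪u, (z + u) - z⟫ = ‖u‖^2 := by
      rw [add_sub_cancel_left]; exact real_inner_self_eq_norm_sq u
    have h3 := hlip (z+u) z
    have h4 : ‖(z+u) - z‖ = ‖u‖ := by rw [add_sub_cancel_left]
    rw [h2] at h1
    rw [h4] at h3
    rcases eq_or_lt_of_le (norm_nonneg u) with hu | hu
    · rw [← hu]; exact hM.le
    · nlinarith
  have hmaxim : ∀ z u, IsSubgradientAt F z u → F₀ z = ⟪z, u⟫ - h u := by
    intro z u hs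
    have huB : u ∈ B := mem_closedBall_zero_iff.2 (hMbd z u hs)
    obtain ⟨i₀, _, hi₀⟩ := Finset.exists_mem_eq_sup' (Finset.univ_nonempty (α := ι))
      (fun i => q i u)
    obtain ⟨xu, hxu⟩ : ∃ v : E, v = x i₀ + (1/L)•(u - g i₀) := ⟨_, rfl⟩
    have hqexp : ∀ y, q i₀ y = q i₀ u + ⟪xu, y - u⟫ + 1/(2*L) * ‖y - u‖^2 := by
      intro y
      have hsplit : y - g i₀ = (y - u) + (u - g i₀) := by abel
      simp only [hq, hxu]
      rw [hsplit, norm_add_sq_real, inner_add_right, inner_add_left, real_inner_smul_left,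
        inner_sub_right, inner_sub_right]
      have hcm : ⟪u - g i₀, y - u⟫ = ⟪y - u, u - g i₀⟫ := real_inner_comm _ _
      rw [← hcm]
      field_simp
      ring
    have hhu : h u = q i₀ u := by rw [hh]; exact hi₀
    have hplain : ∀ y, h u + ⟪xu, y - u⟫ ≤ h y := by
      intro y
      have hq1 : q i₀ y ≤ h y := by
        rw [hh]; exact Finset.le_sup' (fun j => q j y) (Finset.mem_univ i₀)
      have hq2 := hqexp y
      have hsq : 0 ≤ 1/(2*L) * ‖y - u‖^2 := by positivity
      rw [hhu]
      linarith
    have hFxu : F₀ xu = ⟪xu, u⟫ - h u := by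
      refine le_antisymm ?_ ?_
      · obtain ⟨⟨y₀, hy₀B, heq⟩, _⟩ := hkey xu
        rw [heq]
        have hpl := hplain y₀
        have hexp2 : ⟪xu, y₀ - u⟫ = ⟪xu, y₀⟫ - ⟪xu, u⟫ := inner_sub_right _ _ _
        simp only [hφ]
        linarith
      · have hub := (hkey xu).2 u huB
        simp only [hφ] at hub
        exact hub
    have hsub := (hsgiff z u).1 hs xu
    rw [hFxu] at hsub
    have hin : ⟪u, xu - z⟫ = ⟪xu, u⟫ - ⟪z, u⟫ := by
      rw [inner_sub_right, real_inner_comm u xu, real_inner_comm u z]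
    rw [hin] at hsub
    have hub2 := (hkey z).2 u huB
    simp only [hφ] at hub2
    refine le_antisymm (by linarith) hub2
  have hconjsub : ∀ z u, IsSubgradientAt F z u → ∀ w ∈ B, h u + ⟪z, w - u⟫ ≤ h w := by
    intro z u hs w hwB
    have hmax := hmaxim z u hs
    have hub := (hkey z).2 w hwB
    simp only [hφ] at hub
    rw [hmax] at hub
    have hie : ⟪z, w - u⟫ = ⟪z,w⟫ - ⟪z,u⟫ := inner_sub_right _ _ _
    linarith
  have hstrongsub : ∀ z u, IsSubgradientAt F z u → ∀ w ∈ B,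
      h u + ⟪z, w - u⟫ + 1/(2*L) * ‖w - u‖^2 ≤ h w := by
    intro z u hs w hwB
    have huB : u ∈ B := mem_closedBall_zero_iff.2 (hMbd z u hs)
    have key : ∀ t : ℝ, 0 < t → t < 1 →
        (h u + ⟪z, w - u⟫ + 1/(2*L) * ‖w - u‖^2 - h w) ≤ (1/(2*L) * ‖w - u‖^2) * t := by
      intro t ht0 ht1
      have hwtB : (1-t)•u + t•w ∈ B :=
        (convex_closedBall (0:E) M) huB hwB (by linarith) ht0.le (by ring)
      have h1 := hconjsub z u hs _ hwtB
      have h2 := hstrong u w t ht0.le ht1.le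
      have h3 : ((1-t)•u + t•w) - u = t•(w-u) := by
        rw [smul_sub, sub_smul, one_smul]
        abel
      have h4 : ⟪z, ((1-t)•u + t•w) - u⟫ = t * ⟪z, w - u⟫ := by
        rw [h3, real_inner_smul_right]
      rw [h4] at h1
      have h5 : t * (h u + ⟪z, w - u⟫ + 1/(2*L) * ‖w - u‖^2 - h w)
          ≤ t * ((1/(2*L) * ‖w - u‖^2) * t) := by nlinarith
      exact (mul_le_mul_iff_right₀ ht0).1 h5
    linarith [aux_t_le key]
  have hsmoothF : ∀ z₁ z₂ u₁ u₂, IsSubgradientAt F z₁ u₁ → IsSubgradientAt F z₂ u₂ →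
      ‖u₁ - u₂‖ ≤ L * ‖z₁ - z₂‖ := by
    intro z₁ z₂ u₁ u₂ h1 h2
    have hu₁B : u₁ ∈ B := mem_closedBall_zero_iff.2 (hMbd _ _ h1)
    have hu₂B : u₂ ∈ B := mem_closedBall_zero_iff.2 (hMbd _ _ h2)
    have e1 := hstrongsub z₁ u₁ h1 u₂ hu₂B
    have e2 := hstrongsub z₂ u₂ h2 u₁ hu₁B
    have hnorm : ‖u₂ - u₁‖ = ‖u₁ - u₂‖ := norm_sub_rev _ _
    rw [hnorm] at e1
    have hin1 : ⟪z₁, u₂ - u₁⟫ = ⟪z₁,u₂⟫ - ⟪z₁,u₁⟫ := inner_sub_right _ _ _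
    have hin2 : ⟪z₂, u₁ - u₂⟫ = ⟪z₂,u₁⟫ - ⟪z₂,u₂⟫ := inner_sub_right _ _ _
    have hin3 : ⟪z₁ - z₂, u₁ - u₂⟫ = (⟪z₁,u₁⟫ - ⟪z₁,u₂⟫) - (⟪z₂,u₁⟫ - ⟪z₂,u₂⟫) := by
      rw [inner_sub_left, inner_sub_right, inner_sub_right]
    have hsum : (1/L) * ‖u₁ - u₂‖^2 ≤ ⟪z₁ - z₂, u₁ - u₂⟫ := by
      rw [hin3]
      rw [hin1] at e1
      rw [hin2] at e2
      have hLL : (1:ℝ)/L = 1/(2*L) + 1/(2*L) := by field_simp; ring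
      rw [hLL, add_mul]
      linarith
    have hcs : ⟪z₁ - z₂, u₁ - u₂⟫ ≤ ‖z₁ - z₂‖ * ‖u₁ - u₂‖ := real_inner_le_norm _ _
    rcases eq_or_lt_of_le (norm_nonneg (u₁ - u₂)) with h0 | h0
    · rw [← h0]; positivity
    · have h6 : (1/L) * ‖u₁-u₂‖^2 ≤ ‖z₁-z₂‖ * ‖u₁-u₂‖ := hsum.trans hcs
      have h6' : (1/L * ‖u₁-u₂‖) * ‖u₁-u₂‖ ≤ ‖z₁-z₂‖ * ‖u₁-u₂‖ := by nlinarith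
      have h7 : 1/L * ‖u₁-u₂‖ ≤ ‖z₁-z₂‖ := le_of_mul_le_mul_right h6' h0
      have h8 := mul_le_mul_of_nonneg_left h7 hL.le
      rw [show L * (1/L * ‖u₁-u₂‖) = ‖u₁-u₂‖ by field_simp] at h8
      exact h8
  have hinterp : ∀ i, F (x i) = ((f i : ℝ) : EReal) ∧ IsSubgradientAt F (x i) (g i) := by
    intro i
    have hval : F₀ (x i) = f i := by
      refine le_antisymm ?_ ?_
      · obtain ⟨⟨y₀, hy₀B, heq⟩, _⟩ := hkey (x i)
        rw [heq]
        have hq1 : q i y₀ ≤ h y₀ := by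
          rw [hh]; exact Finset.le_sup' (fun j => q j y₀) (Finset.mem_univ i)
        have hsq : 0 ≤ 1/(2*L) * ‖y₀ - g i‖^2 := by positivity
        simp only [hφ]
        simp only [hq, hc] at hq1
        have hin : ⟪x i, y₀ - g i⟫ = ⟪x i, y₀⟫ - ⟪x i, g i⟫ := inner_sub_right _ _ _
        have hsym : ⟪g i, x i⟫ = ⟪x i, g i⟫ := real_inner_comm _ _
        rw [hin, hsym] at hq1
        linarith
      · have hub := (hkey (x i)).2 (g i) (hgBmem i)
        simp only [hφ] at hub
        rw [hhg i] at hub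
        simp only [hc] at hub
        have hsym : ⟪g i, x i⟫ = ⟪x i, g i⟫ := real_inner_comm _ _
        linarith
    constructor
    · simp only [hF, hval]
    · rw [hsgiff]
      intro y
      have hub := (hkey y).2 (g i) (hgBmem i)
      simp only [hφ] at hub
      rw [hhg i] at hub
      simp only [hc] at hub
      have h1 : ⟪g i, y - x i⟫ = ⟪y, g i⟫ - ⟪g i, x i⟫ := by
        rw [inner_sub_right, real_inner_comm (g i) y]
      rw [hval, h1]
      linarith
  have hFcont : Continuous F₀ := by
    have hlw : LipschitzWith (Real.toNNReal M) F₀ := by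
      apply LipschitzWith.of_dist_le_mul
      intro a b
      rw [Real.dist_eq, Real.coe_toNNReal M hM.le, dist_eq_norm, abs_le]
      have h1 := hlip a b
      have h2 := hlip b a
      rw [norm_sub_rev] at h2
      constructor <;> linarith
    exact hlw.continuous
  have hlsc : LowerSemicontinuous F := by
    rw [hF]
    exact (continuous_coe_real_ereal.comp hFcont).lowerSemicontinuous
  have hconvE : ∀ (a b : E) (t : ℝ), 0 ≤ t → t ≤ 1 →
      F (t • a + (1-t) • b) ≤ (t : EReal) * F a + ((1-t : ℝ) : EReal) * F b := by
    intro a b t ht0 ht1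
    simp only [hF, ← EReal.coe_mul, ← EReal.coe_add]
    exact EReal.coe_le_coe_iff.2 (hconv₀ a b t ht0 ht1)
  refine ⟨F, ⟨⟨0, ?_, ⟩, fun z => ?_, hlsc, hconvE⟩, hsmoothF, hMbd, hinterp⟩
  · simp only [hF]; exact EReal.coe_ne_top _
  · simp only [hF]; exact EReal.coe_ne_bot _
private lemma aux_numeric (L M D d e : ℝ) (n : ℕ) (hL : 0 < L) (hM : 0 < M) (hD : 0 ≤ D)
    (hd0 : 0 < d) (hd1 : d ≤ 1) (hn1 : 1 ≤ n)
    (hn2 : L * D^2 < e * n)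
    (hd2 : d * (L*D + L*D*((n:ℝ)+1) + 2*(n:ℝ)*L + M + 1) ≤ e/2) :
    M*d + L * (((1/(n:ℝ))*D + 2*d) * ((D/(n:ℝ))*((n:ℝ)*((n:ℝ)+1)/2) + (n:ℝ)*d))
      ≤ L/2*D^2 + e := by
  have hnn : (0:ℝ) < (n:ℝ) := by exact_mod_cast Nat.lt_of_lt_of_le Nat.zero_lt_one hn1
  have heq : ((1/(n:ℝ))*D + 2*d) * ((D/(n:ℝ))*((n:ℝ)*((n:ℝ)+1)/2) + (n:ℝ)*d)
      = D^2/2 + D^2/(2*(n:ℝ)) + D*d + d*D*((n:ℝ)+1) + 2*(n:ℝ)*d^2 := by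
    field_simp
    ring
  have h1 : L * D^2 / (2*(n:ℝ)) ≤ e/2 := by
    rw [div_le_div_iff₀ (by positivity) (by norm_num : (0:ℝ) < 2)]
    nlinarith
  have hsq : d^2 ≤ d := by nlinarith
  have h2 : L * (2*(n:ℝ)*d^2) ≤ 2*(n:ℝ)*L*d := by
    nlinarith [mul_le_mul_of_nonneg_left hsq (by positivity : (0:ℝ) ≤ 2*(n:ℝ)*L)]
  have h3 : L * (D^2/(2*(n:ℝ))) = L * D^2/(2*(n:ℝ)) := by ring
  rw [heq]
  nlinarith [h1, h2, hd2]


set_option maxHeartbeats 2000000 in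
private lemma aux_necessity (L M : ℝ) (hL : 0 < L) (hM : 0 < M) (F : E → EReal)
    (hne_bot : ∀ w, F w ≠ ⊥) (hlsc : LowerSemicontinuous F)
    (hconv : ∀ x y : E, ∀ t : ℝ, 0 ≤ t → t ≤ 1 →
      F (t • x + (1 - t) • y) ≤ (t : EReal) * F x + ((1 - t : ℝ) : EReal) * F y)
    (hsmooth : ∀ x₁ x₂ g₁ g₂, IsSubgradientAt F x₁ g₁ → IsSubgradientAt F x₂ g₂ →
          ‖g₁ - g₂‖ ≤ L * ‖x₁ - x₂‖)
    (hbound : ∀ z u, IsSubgradientAt F z u → ‖u‖ ≤ M)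
    (xi xj gi gj : E) (fi fj : ℝ)
    (hFi : F xi = ((fi:ℝ) : EReal)) (hgi : IsSubgradientAt F xi gi)
    (hFj : F xj = ((fj:ℝ) : EReal)) (hgj : IsSubgradientAt F xj gj) :
    1 / (2 * L) * ‖gi - gj‖ ^ 2 ≤ fi - fj - (inner ℝ gj (xi - xj) : ℝ) := by
  classical
  -- points with subgradients have finite value
  have hsubtop : ∀ p u, IsSubgradientAt F p u → F p ≠ ⊤ := by
    intro p u hu htop
    have h1 := hu xj
    rw [htop, hFj] at h1
    have h2 : (⊤ : EReal) + ((inner ℝ u (xj - p) : ℝ) : EReal) = ⊤ := by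
      rw [EReal.top_add_coe]
    rw [h2] at h1
    exact EReal.coe_ne_top fj (top_le_iff.1 h1)
  -- real form of subgradient inequality
  have hsub_real : ∀ p u w, IsSubgradientAt F p u → F w ≠ ⊤ →
      (F p).toReal + ⟪u, w - p⟫ ≤ (F w).toReal := by
    intro p u w hu hw
    have h1 := hu w
    rw [← EReal.coe_toReal (hsubtop p u hu) (hne_bot p),
        ← EReal.coe_toReal hw (hne_bot w), ← EReal.coe_add] at h1
    exact EReal.coe_le_coe_iff.1 h1
  -- affine lower bound on F
  have hgjM : ‖gj‖ ≤ M := hbound _ _ hgj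
  have haff : ∀ w, ((fj - M * ‖w - xj‖ : ℝ) : EReal) ≤ F w := by
    intro w
    have h1 := hgj w
    rw [hFj, ← EReal.coe_add] at h1
    refine le_trans (EReal.coe_le_coe_iff.2 ?_) h1
    have habs := abs_real_inner_le_norm gj (w - xj)
    have h2 : -(‖gj‖ * ‖w - xj‖) ≤ ⟪gj, w - xj⟫ := neg_le_of_abs_le habs
    have h3 : ‖gj‖ * ‖w - xj‖ ≤ M * ‖w - xj‖ :=
      mul_le_mul_of_nonneg_right hgjM (norm_nonneg _)
    linarith
  -- prox points: subgradients exist near every point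
  have hprox : ∀ (y : E) (lam : ℝ), 0 < lam → ∃ p, IsSubgradientAt F p (lam • (y - p)) := by
    intro y lam hlam
    obtain ⟨G, hG⟩ : ∃ v : E → EReal,
      v = fun w => F w + ((lam/2 * ‖w - y‖^2 : ℝ) : EReal) := ⟨_, rfl⟩
    have hGlsc : LowerSemicontinuous G := by
      rw [hG]
      refine LowerSemicontinuous.add' hlsc ?_ ?_
      · refine (continuous_coe_real_ereal.comp ?_).lowerSemicontinuous
        exact continuous_const.mul (((continuous_id.sub continuous_const).norm).pow 2)
      · intro w
        exact EReal.continuousAt_add (Or.inr (EReal.coe_ne_bot _)) (Or.inr (EReal.coe_ne_top _))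
    obtain ⟨r, hr⟩ : ∃ v : ℝ, v = ‖xj - y‖ := ⟨_, rfl⟩
    obtain ⟨R, hR⟩ : ∃ v : ℝ, v = (2/lam)*(2*M + M*r + (lam/2)*r^2 + 1) + 1 + r := ⟨_, rfl⟩
    have hr0 : 0 ≤ r := by rw [hr]; exact norm_nonneg _
    have hRr : r + 1 ≤ R := by
      have h0 : 0 ≤ (2/lam)*(2*M + M*r + (lam/2)*r^2 + 1) := by positivity
      rw [hR]; linarith
    have hxjK : xj ∈ Metric.closedBall y R := by
      rw [Metric.mem_closedBall, dist_eq_norm, ← hr]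
      linarith
    obtain ⟨p, hpK, hmin⟩ := aux_lsc_min G hGlsc (isCompact_closedBall y R) ⟨xj, hxjK⟩
    have hGxj : G xj = ((fj + lam/2 * ‖xj - y‖^2 : ℝ) : EReal) := by
      rw [hG]; simp only; rw [hFj, ← EReal.coe_add]
    -- global minimality
    have hglobal : ∀ w, G p ≤ G w := by
      intro w
      by_cases hw : w ∈ Metric.closedBall y R
      · exact hmin w hw
      · rw [Metric.mem_closedBall, not_le, dist_eq_norm] at hw
        rw [hR] at hw
        have hs1 : 1 ≤ ‖w - y‖ := by
          have h0 : 0 ≤ (2/lam)*(2*M + M*r + (lam/2)*r^2 + 1) := by positivity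
          linarith
        have hs2 : 2*M + M*r + (lam/2)*r^2 + 1 ≤ (lam/2)*‖w - y‖ := by
          have h1 : (2/lam)*(2*M + M*r + (lam/2)*r^2 + 1) ≤ ‖w - y‖ := by linarith
          have h2 := mul_le_mul_of_nonneg_left h1 (by positivity : (0:ℝ) ≤ lam/2)
          rw [show lam/2 * ((2/lam)*(2*M + M*r + (lam/2)*r^2 + 1))
            = 2*M + M*r + (lam/2)*r^2 + 1 by field_simp] at h2
          exact h2
        have htri : ‖w - xj‖ ≤ ‖w - y‖ + r := by
          have hsplit : w - xj = (w - y) + (y - xj) := by abel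
          have h1 := norm_add_le (w - y) (y - xj)
          rw [← hsplit, norm_sub_rev y xj, ← hr] at h1
          exact h1
        have hreal : fj + lam/2 * ‖xj - y‖^2 + 1 ≤ fj - M*‖w - xj‖ + lam/2 * ‖w - y‖^2 := by
          have hA : 0 ≤ (lam/2)*‖w - y‖ - M - (M + M*r + (lam/2)*r^2 + 1) := by linarith
          have hprod : 0 ≤ (‖w - y‖ - 1) * ((lam/2)*‖w - y‖ - M - (M + M*r + (lam/2)*r^2 + 1)) :=
            mul_nonneg (by linarith) hA
          have hM0 : 0 ≤ M * (‖w - y‖ + r - ‖w - xj‖) := mul_nonneg hM.le (by linarith)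
          have hrr : ‖xj - y‖^2 = r^2 := by rw [hr]
          have hB : 0 ≤ M + M*r + (lam/2)*r^2 + 1 := by positivity
          have hprod2 : 0 ≤ (‖w - y‖ - 1) * (M + M*r + (lam/2)*r^2 + 1) :=
            mul_nonneg (by linarith) hB
          nlinarith [hprod, hM0, hprod2]
        have hlow : ((fj - M*‖w - xj‖ + lam/2 * ‖w - y‖^2 : ℝ) : EReal) ≤ G w := by
          rw [hG]; simp only
          rw [EReal.coe_add]
          exact add_le_add (haff w) (le_refl _)
        calc G p ≤ G xj := hmin xj hxjK
          _ = ((fj + lam/2 * ‖xj - y‖^2 : ℝ) : EReal) := hGxj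
          _ ≤ ((fj - M*‖w - xj‖ + lam/2 * ‖w - y‖^2 : ℝ) : EReal) :=
              EReal.coe_le_coe_iff.2 (by linarith)
          _ ≤ G w := hlow
    -- F p is finite
    have hFptop : F p ≠ ⊤ := by
      intro htop
      have h1 := hglobal xj
      rw [hGxj, hG] at h1
      simp only at h1
      rw [htop, EReal.top_add_coe] at h1
      exact EReal.coe_ne_top _ (top_le_iff.1 h1)
    obtain ⟨ap, hap⟩ : ∃ v : ℝ, v = (F p).toReal := ⟨_, rfl⟩
    have hpcoe : F p = ((ap:ℝ) : EReal) := by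
      rw [hap]; exact (EReal.coe_toReal hFptop (hne_bot p)).symm
    refine ⟨p, ?_⟩
    intro w
    by_cases hwtop : F w = ⊤
    · rw [hwtop]; exact le_top
    obtain ⟨aw, haw⟩ : ∃ v : ℝ, v = (F w).toReal := ⟨_, rfl⟩
    have hwcoe : F w = ((aw:ℝ) : EReal) := by
      rw [haw]; exact (EReal.coe_toReal hwtop (hne_bot w)).symm
    have hmain : ap + lam * ⟪y - p, w - p⟫ - aw ≤ 0 := by
      refine aux_t_le (b := lam/2 * ‖w - p‖^2) ?_
      intro t ht0 ht1
      have hcv := hconv w p t ht0.le ht1.le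
      rw [hwcoe, hpcoe, ← EReal.coe_mul, ← EReal.coe_mul, ← EReal.coe_add] at hcv
      have hwt_top : F (t • w + (1 - t) • p) ≠ ⊤ := by
        intro htop; rw [htop] at hcv
        exact EReal.coe_ne_top _ (top_le_iff.1 hcv)
      obtain ⟨awt, hawt⟩ : ∃ v : ℝ, v = (F (t • w + (1 - t) • p)).toReal := ⟨_, rfl⟩
      have hwtcoe : F (t • w + (1 - t) • p) = ((awt:ℝ) : EReal) := by
        rw [hawt]; exact (EReal.coe_toReal hwt_top (hne_bot _)).symm
      rw [hwtcoe] at hcv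
      have hcvr : awt ≤ t * aw + (1-t) * ap := EReal.coe_le_coe_iff.1 hcv
      have hgmin := hglobal (t • w + (1 - t) • p)
      rw [hG] at hgmin
      simp only at hgmin
      rw [hpcoe, hwtcoe, ← EReal.coe_add, ← EReal.coe_add] at hgmin
      have hgminr : ap + lam/2 * ‖p - y‖^2
          ≤ awt + lam/2 * ‖(t • w + (1 - t) • p) - y‖^2 := EReal.coe_le_coe_iff.1 hgmin
      have hwt : (t • w + (1 - t) • p) - y = (p - y) + t • (w - p) := by
        rw [sub_smul, one_smul, smul_sub]
        abel
      have hnexp : ‖(t • w + (1 - t) • p) - y‖^2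
          = ‖p - y‖^2 + 2*(t*⟪p - y, w - p⟫) + t^2*‖w - p‖^2 := by
        rw [hwt, norm_add_sq_real, real_inner_smul_right, norm_smul,
          Real.norm_eq_abs, mul_pow, sq_abs]
      rw [hnexp] at hgminr
      have hneg : ⟪y - p, w - p⟫ = -⟪p - y, w - p⟫ := by
        rw [show y - p = -(p - y) from by abel, inner_neg_left]
      rw [hneg]
      have h5 : t * (ap + lam * -⟪p - y, w - p⟫ - aw)
          ≤ t * ((lam/2 * ‖w - p‖^2) * t) := by nlinarith
      exact (mul_le_mul_iff_right₀ ht0).1 h5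
    rw [hpcoe, hwcoe, ← EReal.coe_add]
    refine EReal.coe_le_coe_iff.2 ?_
    have hin : ⟪lam • (y - p), w - p⟫ = lam * ⟪y - p, w - p⟫ := real_inner_smul_left _ _ _
    linarith [hin.le, hin.ge]
  -- approximate subgradient points
  have happrox : ∀ (y : E) (δ : ℝ), 0 < δ → ∃ p u, ‖p - y‖ ≤ δ ∧ IsSubgradientAt F p u := by
    intro y δ hδ
    obtain ⟨p, hp⟩ := hprox y (M/δ) (by positivity)
    refine ⟨p, _, ?_, hp⟩
    have hMu := hbound _ _ hp
    rw [norm_smul, Real.norm_eq_abs, abs_of_pos (by positivity : (0:ℝ) < M/δ)] at hMu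
    rw [norm_sub_rev]
    by_contra hcon
    push_neg at hcon
    have h1 : M/δ * δ < M/δ * ‖y - p‖ := by
      apply mul_lt_mul_of_pos_left hcon (by positivity)
    rw [div_mul_cancel₀ M (ne_of_gt hδ)] at h1
    linarith
  -- descent lemma via chains of approximate subgradient points
  have hgiM : ‖gi‖ ≤ M := hbound _ _ hgi
  have hdescent : ∀ (z : E) (ε : ℝ), 0 < ε →
      F z ≤ ((fi + ⟪gi, z - xi⟫ + L/2 * ‖z - xi‖^2 + ε : ℝ) : EReal) := by
    intro z ε hε
    by_contra hcon
    push_neg at hcon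
    have hev := hlsc z _ hcon
    rw [Metric.eventually_nhds_iff] at hev
    obtain ⟨rad, hrad, hball⟩ := hev
    obtain ⟨n₀, hn₀⟩ := exists_nat_gt (L * ‖z - xi‖^2 / ε)
    obtain ⟨n, hn1, hn2⟩ : ∃ n : ℕ, 1 ≤ n ∧ L * ‖z - xi‖^2 < ε * n := by
      refine ⟨n₀ + 1, Nat.le_add_left 1 n₀, ?_⟩
      have h1 : L * ‖z - xi‖^2 / ε < (n₀:ℝ) + 1 := by push_cast; linarith
      calc L * ‖z - xi‖^2 = (L * ‖z - xi‖^2 / ε) * ε := by field_simp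
        _ < ((n₀:ℝ)+1) * ε := mul_lt_mul_of_pos_right h1 hε
        _ = ε * (((n₀+1:ℕ)):ℝ) := by push_cast; ring
    have hnn : (0:ℝ) < (n:ℝ) := by exact_mod_cast Nat.lt_of_lt_of_le Nat.zero_lt_one hn1
    obtain ⟨δ, hδdef⟩ : ∃ v : ℝ, v = min (rad/2)
        (min 1 ((ε/2) / (L*‖z - xi‖ + L*‖z - xi‖*((n:ℝ)+1) + 2*(n:ℝ)*L + M + 1))) := ⟨_, rfl⟩
    have hden : (0:ℝ) < L*‖z - xi‖ + L*‖z - xi‖*((n:ℝ)+1) + 2*(n:ℝ)*L + M + 1 := by positivity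
    have hδpos : 0 < δ := by
      rw [hδdef]
      exact lt_min (by positivity) (lt_min one_pos (by positivity))
    have hδ1 : δ ≤ 1 := by
      rw [hδdef]; exact le_trans (min_le_right _ _) (min_le_left _ _)
    have hδr : δ ≤ rad/2 := by rw [hδdef]; exact min_le_left _ _
    have hδ2 : δ * (L*‖z - xi‖ + L*‖z - xi‖*((n:ℝ)+1) + 2*(n:ℝ)*L + M + 1) ≤ ε/2 := by
      have hle : δ ≤ (ε/2) / (L*‖z - xi‖ + L*‖z - xi‖*((n:ℝ)+1) + 2*(n:ℝ)*L + M + 1) := by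
        rw [hδdef]; exact le_trans (min_le_right _ _) (min_le_right _ _)
      calc δ * (L*‖z - xi‖ + L*‖z - xi‖*((n:ℝ)+1) + 2*(n:ℝ)*L + M + 1)
          ≤ ((ε/2) / (L*‖z - xi‖ + L*‖z - xi‖*((n:ℝ)+1) + 2*(n:ℝ)*L + M + 1))
            * (L*‖z - xi‖ + L*‖z - xi‖*((n:ℝ)+1) + 2*(n:ℝ)*L + M + 1) :=
            mul_le_mul_of_nonneg_right hle hden.le
        _ = ε/2 := div_mul_cancel₀ (ε/2) hden.ne'
    choose pf uf hpf hsubf using fun (yy : E) => happrox yy δ hδpos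
    obtain ⟨W, hW⟩ : ∃ v : ℕ → E, v = fun k : ℕ => xi + ((k:ℝ)/(n:ℝ)) • (z - xi) := ⟨_, rfl⟩
    obtain ⟨Q, hQdef⟩ : ∃ v : ℕ → E, v = fun k => if k = 0 then xi else pf (W k) := ⟨_, rfl⟩
    obtain ⟨V, hVdef⟩ : ∃ v : ℕ → E, v = fun k => if k = 0 then gi else uf (W k) := ⟨_, rfl⟩
    have hQ0 : Q 0 = xi := by rw [hQdef]; simp
    have hV0 : V 0 = gi := by rw [hVdef]; simp
    have hQk : ∀ k, k ≠ 0 → Q k = pf (W k) := by intro k hk; rw [hQdef]; simp [hk]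
    have hVk : ∀ k, k ≠ 0 → V k = uf (W k) := by intro k hk; rw [hVdef]; simp [hk]
    have hQsub : ∀ k, IsSubgradientAt F (Q k) (V k) := by
      intro k
      by_cases hk : k = 0
      · rw [hk, hQ0, hV0]; exact hgi
      · rw [hQk k hk, hVk k hk]; exact hsubf (W k)
    have hQtop : ∀ k, F (Q k) ≠ ⊤ := fun k => hsubtop _ _ (hQsub k)
    have hW0 : W 0 = xi := by
      rw [hW]; simp
    have hWdist : ∀ k, ‖Q k - W k‖ ≤ δ := by
      intro k
      by_cases hk : k = 0
      · rw [hk, hQ0, hW0, sub_self, norm_zero]; exact hδpos.le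
      · rw [hQk k hk]; exact hpf (W k)
    have hWnorm : ∀ k : ℕ, ‖W k - xi‖ = ((k:ℝ)/(n:ℝ)) * ‖z - xi‖ := by
      intro k
      rw [hW]
      simp only [add_sub_cancel_left]
      rw [norm_smul, Real.norm_eq_abs, abs_of_nonneg (by positivity)]
    have hWstep : ∀ k : ℕ, ‖W (k+1) - W k‖ = (1/(n:ℝ)) * ‖z - xi‖ := by
      intro k
      rw [hW]
      simp only
      rw [show xi + (((k+1:ℕ):ℝ)/(n:ℝ)) • (z - xi) - (xi + ((k:ℝ)/(n:ℝ)) • (z - xi))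
          = ((((k+1:ℕ):ℝ))/(n:ℝ) - (k:ℝ)/(n:ℝ)) • (z - xi) from by rw [sub_smul]; abel]
      rw [show (((k+1:ℕ):ℝ))/(n:ℝ) - (k:ℝ)/(n:ℝ) = 1/(n:ℝ) from by push_cast; ring]
      rw [norm_smul, Real.norm_eq_abs, abs_of_nonneg (by positivity)]
    -- induction along the chain
    have hkey : ∀ k, (F (Q k)).toReal ≤ fi + ⟪gi, Q k - xi⟫ +
        L * ∑ m ∈ Finset.range k, (‖Q (m+1) - xi‖ * ‖Q (m+1) - Q m‖) := by
      intro k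
      induction k with
      | zero =>
        rw [hQ0, hFi]
        simp
      | succ k ih =>
        have e1 := hsub_real (Q (k+1)) (V (k+1)) (Q k) (hQsub (k+1)) (hQtop k)
        have e2 : ‖V (k+1) - gi‖ ≤ L * ‖Q (k+1) - xi‖ := hsmooth _ _ _ _ (hQsub (k+1)) hgi
        have e3 : ⟪V (k+1), Q k - Q (k+1)⟫ = -⟪V (k+1), Q (k+1) - Q k⟫ := by
          rw [show Q k - Q (k+1) = -(Q (k+1) - Q k) from by abel, inner_neg_right]
        have e4 : ⟪V (k+1) - gi, Q (k+1) - Q k⟫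
            = ⟪V (k+1), Q (k+1) - Q k⟫ - ⟪gi, Q (k+1) - Q k⟫ := inner_sub_left _ _ _
        have e5 : ⟪V (k+1) - gi, Q (k+1) - Q k⟫ ≤ ‖V (k+1) - gi‖ * ‖Q (k+1) - Q k‖ :=
          real_inner_le_norm _ _
        have e6 : ‖V (k+1) - gi‖ * ‖Q (k+1) - Q k‖
            ≤ (L * ‖Q (k+1) - xi‖) * ‖Q (k+1) - Q k‖ :=
          mul_le_mul_of_nonneg_right e2 (norm_nonneg _)
        have e7 : ⟪gi, Q k - xi⟫ + ⟪gi, Q (k+1) - Q k⟫ = ⟪gi, Q (k+1) - xi⟫ := by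
          rw [← inner_add_right,
            show Q k - xi + (Q (k+1) - Q k) = Q (k+1) - xi from by abel]
        rw [Finset.sum_range_succ]
        rw [e3] at e1
        linarith [ih, e1, e4.le, e4.ge, e5, e6, e7.le, e7.ge]
    -- endpoint
    have hWn : W n = z := by
      rw [hW]
      simp only
      rw [div_self (ne_of_gt hnn), one_smul]
      abel
    have hQnz : ‖Q n - z‖ ≤ δ := by
      have h1 := hWdist n
      rw [hWn] at h1
      exact h1
    have hQnball : dist (Q n) z < rad := by
      rw [dist_eq_norm]
      linarith
    have hlt := hball hQnball
    have hltr : fi + ⟪gi, z - xi⟫ + L/2 * ‖z - xi‖^2 + ε < (F (Q n)).toReal := by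
      beta_reduce at hlt
      rw [show F (Q n) = (((F (Q n)).toReal : ℝ) : EReal)
        from (EReal.coe_toReal (hQtop n) (hne_bot _)).symm] at hlt
      exact EReal.coe_lt_coe_iff.1 hlt
    -- sum bound
    have hQnxi : ∀ m : ℕ, ‖Q (m+1) - xi‖ ≤ (((m:ℝ)+1)/(n:ℝ)) * ‖z - xi‖ + δ := by
      intro m
      have h1 := dist_triangle (Q (m+1)) (W (m+1)) xi
      rw [dist_eq_norm, dist_eq_norm, dist_eq_norm] at h1
      have h2 := hWdist (m+1)
      have h3 := hWnorm (m+1)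
      push_cast at h3
      linarith
    have hQstep : ∀ m : ℕ, ‖Q (m+1) - Q m‖ ≤ (1/(n:ℝ)) * ‖z - xi‖ + 2*δ := by
      intro m
      have h1 := dist_triangle4 (Q (m+1)) (W (m+1)) (W m) (Q m)
      rw [dist_eq_norm, dist_eq_norm, dist_eq_norm, dist_eq_norm] at h1
      have h2 := hWdist (m+1)
      have h3 := hWstep m
      have h4 := hWdist m
      rw [norm_sub_rev] at h4
      linarith
    have hterm : ∀ m ∈ Finset.range n, ‖Q (m+1) - xi‖ * ‖Q (m+1) - Q m‖ ≤
        ((((m:ℝ)+1)/(n:ℝ)) * ‖z - xi‖ + δ) * ((1/(n:ℝ)) * ‖z - xi‖ + 2*δ) := by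
      intro m _
      exact mul_le_mul (hQnxi m) (hQstep m) (norm_nonneg _) (by positivity)
    have hsum : ∑ m ∈ Finset.range n, (‖Q (m+1) - xi‖ * ‖Q (m+1) - Q m‖)
        ≤ ((1/(n:ℝ))*‖z - xi‖ + 2*δ)
          * ((‖z - xi‖/(n:ℝ)) * ((n:ℝ)*((n:ℝ)+1)/2) + (n:ℝ)*δ) := by
      calc ∑ m ∈ Finset.range n, (‖Q (m+1) - xi‖ * ‖Q (m+1) - Q m‖)
          ≤ ∑ m ∈ Finset.range n,
            (((((m:ℝ)+1)/(n:ℝ)) * ‖z - xi‖ + δ) * ((1/(n:ℝ)) * ‖z - xi‖ + 2*δ)) :=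
            Finset.sum_le_sum hterm
        _ = (∑ m ∈ Finset.range n, ((‖z - xi‖/(n:ℝ)) * ((m:ℝ)+1) + δ))
            * ((1/(n:ℝ)) * ‖z - xi‖ + 2*δ) := by
            rw [Finset.sum_mul]
            exact Finset.sum_congr rfl fun m _ => by ring
        _ = ((‖z - xi‖/(n:ℝ)) * ((n:ℝ)*((n:ℝ)+1)/2) + (n:ℝ)*δ)
            * ((1/(n:ℝ)) * ‖z - xi‖ + 2*δ) := by
            rw [Finset.sum_add_distrib, ← Finset.mul_sum, aux_gauss, Finset.sum_const,
              Finset.card_range, nsmul_eq_mul]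
        _ = ((1/(n:ℝ))*‖z - xi‖ + 2*δ)
            * ((‖z - xi‖/(n:ℝ)) * ((n:ℝ)*((n:ℝ)+1)/2) + (n:ℝ)*δ) := by ring
    -- inner product bound at endpoint
    have hin1 : ⟪gi, Q n - xi⟫ = ⟪gi, z - xi⟫ + ⟪gi, Q n - z⟫ := by
      rw [← inner_add_right, show z - xi + (Q n - z) = Q n - xi from by abel]
    have hin2 : ⟪gi, Q n - z⟫ ≤ M * δ := by
      have h1 := real_inner_le_norm gi (Q n - z)
      have h2 : ‖gi‖ * ‖Q n - z‖ ≤ M * δ :=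
        mul_le_mul hgiM hQnz (norm_nonneg _) hM.le
      linarith
    have hnum := aux_numeric L M ‖z - xi‖ δ ε n hL hM (norm_nonneg _) hδpos hδ1 hn1 hn2 hδ2
    have hLsum := mul_le_mul_of_nonneg_left hsum hL.le
    have hfin := hkey n
    linarith [hltr, hfin, hin1.le, hin1.ge, hin2, hLsum, hnum]
  -- final combination
  refine le_of_forall_pos_le_add ?_
  intro ε hε
  obtain ⟨z, hz⟩ : ∃ v : E, v = xi - (1/L) • (gi - gj) := ⟨_, rfl⟩
  have hlow := hgj z
  rw [hFj, ← EReal.coe_add] at hlow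
  have hup := hdescent z ε hε
  have hriq : fj + ⟪gj, z - xj⟫ ≤ fi + ⟪gi, z - xi⟫ + L/2 * ‖z - xi‖^2 + ε :=
    EReal.coe_le_coe_iff.1 (le_trans hlow hup)
  have hzxi : z - xi = -((1/L) • (gi - gj)) := by rw [hz]; abel
  have hnormz : ‖z - xi‖^2 = (1/L)^2 * ‖gi - gj‖^2 := by
    rw [hzxi, norm_neg, norm_smul, Real.norm_eq_abs, abs_of_pos (by positivity), mul_pow]
  have hin1 : ⟪gi, z - xi⟫ = -((1/L) * ⟪gi, gi - gj⟫) := by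
    rw [hzxi, inner_neg_right, real_inner_smul_right]
  have hzxj : z - xj = (xi - xj) - (1/L) • (gi - gj) := by rw [hz]; abel
  have hin2 : ⟪gj, z - xj⟫ = ⟪gj, xi - xj⟫ - (1/L) * ⟪gj, gi - gj⟫ := by
    rw [hzxj, inner_sub_right, real_inner_smul_right]
  have hself : ⟪gi, gi - gj⟫ - ⟪gj, gi - gj⟫ = ‖gi - gj‖^2 := by
    rw [← inner_sub_left, real_inner_self_eq_norm_sq]
  have hLsq : L/2 * ((1/L)^2 * ‖gi - gj‖^2) = 1/(2*L) * ‖gi - gj‖^2 := by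
    field_simp
  have hLL : 1/L * ‖gi - gj‖^2 - 1/(2*L) * ‖gi - gj‖^2 = 1/(2*L) * ‖gi - gj‖^2 := by
    field_simp
    ring
  have h1L : 1/L * ⟪gi, gi - gj⟫ - 1/L * ⟪gj, gi - gj⟫ = 1/L * ‖gi - gj‖^2 := by
    rw [← mul_sub, hself]
  rw [hin1, hin2, hnormz] at hriq
  linarith [hriq, hLsq, h1L, hLL]


/-- Interpolation by an `L`-smooth convex function all of whose subgradients are
bounded in norm by `M` is possible iff the smoothness interpolation inequalities
and the gradient bounds hold on the data. -/
theorem stmt17 {ι : Type*} [Fintype ι] (L M : ℝ) (hL : 0 < L) (hM : 0 < M)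
    (x g : ι → E) (f : ι → ℝ) :
    (∃ F : E → EReal, IsProperClosedConvex F ∧
        (∀ x₁ x₂ g₁ g₂, IsSubgradientAt F x₁ g₁ → IsSubgradientAt F x₂ g₂ →
          ‖g₁ - g₂‖ ≤ L * ‖x₁ - x₂‖) ∧
        (∀ z h, IsSubgradientAt F z h → ‖h‖ ≤ M) ∧
        ∀ i, F (x i) = ((f i : ℝ) : EReal) ∧ IsSubgradientAt F (x i) (g i)) ↔
      ∀ i j, 1 / (2 * L) * ‖g i - g j‖ ^ 2 ≤
          f i - f j - (inner ℝ (g j) (x i - x j) : ℝ) ∧ ‖g j‖ ≤ M := by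
  constructor
  · rintro ⟨F, ⟨_, hbot, hlsc, hconv⟩, hsmooth, hbound, hinterp⟩ i j
    exact ⟨aux_necessity L M hL hM F hbot hlsc hconv hsmooth hbound
      (x i) (x j) (g i) (g j) (f i) (f j) (hinterp i).1 (hinterp i).2
      (hinterp j).1 (hinterp j).2, hbound _ _ (hinterp j).2⟩
  · intro hcond
    cases isEmpty_or_nonempty ι with
    | inl hemp =>
      have hz : ∀ z u : E, IsSubgradientAt (fun _ : E => (0:EReal)) z u → u = 0 := by
        intro z u hu
        have h3 := hu (z + u)
        simp only [add_sub_cancel_left, zero_add] at h3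
        have h4 : ⟪u, u⟫ ≤ (0:ℝ) := by exact_mod_cast h3
        have h5 := real_inner_self_eq_norm_sq u
        have h6 : ‖u‖ = 0 := by nlinarith [norm_nonneg u]
        exact norm_eq_zero.1 h6
      refine ⟨fun _ => (0:EReal), ⟨⟨0, by simp⟩, fun z => by simp,
        lowerSemicontinuous_const, ?_⟩, ?_, ?_, fun i => isEmptyElim i⟩
      · intro a b t ht0 ht1
        simp
      · intro x₁ x₂ g₁ g₂ h1 h2
        rw [hz _ _ h1, hz _ _ h2, sub_self, norm_zero]
        positivity
      · intro z u hu
        rw [hz _ _ hu, norm_zero]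
        exact hM.le
    | inr hne => exact aux_construction L M hL hM x g f hcond
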